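/- Let θ₁, θ₂ ∈ ℝ be linearly independent over ℚ and set θ = (θ₁, θ₂). Then for every ε > 0 there exist n, m ∈ ℤ² such that 0 < | |n − θ|² − |m − θ|² | < ε. In particular, the set { |n − θ|² : n ∈ ℤ² } does not satisfy a uniform gap condition. -/
import Mathlib


open Real

noncomputable section

/-- `|n - θ|²` for `n ∈ ℤ²` and `θ ∈ ℝ²`. -/
def distSq (n : ℤ × ℤ) (θ₁ θ₂ : ℝ) : ℝ :=
  ((n.1 : ℝ) - θ₁)^2 + ((n.2 : ℝ) - θ₂)^2

/-- If `θ₁, θ₂` are linearly independent over `ℚ`, the set `{|n-θ|² : n ∈ ℤ²}` has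
arbitrarily small positive differences; in particular it satisfies no uniform gap
condition. -/
theorem no_gap_of_irrational (θ₁ θ₂ : ℝ)
    (hind : ∀ k l : ℚ, (k : ℝ) * θ₁ + (l : ℝ) * θ₂ = 0 → k = 0 ∧ l = 0) :
    (∀ ε : ℝ, 0 < ε → ∃ n m : ℤ × ℤ,
        0 < |distSq n θ₁ θ₂ - distSq m θ₁ θ₂| ∧ |distSq n θ₁ θ₂ - distSq m θ₁ θ₂| < ε) ∧
    ¬ ∃ γ : ℝ, 0 < γ ∧ ∀ n m : ℤ × ℤ,
        distSq n θ₁ θ₂ ≠ distSq m θ₁ θ₂ → γ ≤ |distSq n θ₁ θ₂ - distSq m θ₁ θ₂| := by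
  -- the subgroup of ℤ-combinations of θ₁, θ₂
  set S : AddSubgroup ℝ :=
    { carrier := {x : ℝ | ∃ k l : ℤ, (k : ℝ) * θ₁ + (l : ℝ) * θ₂ = x}
      zero_mem' := ⟨0, 0, by simp⟩
      add_mem' := by
        rintro a b ⟨k, l, rfl⟩ ⟨k', l', rfl⟩
        exact ⟨k + k', l + l', by push_cast; ring⟩
      neg_mem' := by
        rintro a ⟨k, l, rfl⟩
        exact ⟨-k, -l, by push_cast; ring⟩ } with hS
  have hdense : Dense (S : Set ℝ) := by
    rcases S.dense_or_cyclic with h | ⟨a, ha⟩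
    · exact h
    · exfalso
      have h1 : θ₁ ∈ S := ⟨1, 0, by simp⟩
      have h2 : θ₂ ∈ S := ⟨0, 1, by simp⟩
      rw [ha, AddSubgroup.mem_closure_singleton] at h1 h2
      obtain ⟨p, hp⟩ := h1
      obtain ⟨q, hq⟩ := h2
      have : ((q : ℚ) : ℝ) * θ₁ + ((-p : ℚ) : ℝ) * θ₂ = 0 := by
        rw [← hp, ← hq]; push_cast [zsmul_eq_mul]; ring
      obtain ⟨hq0, hp0⟩ := hind q (-p) this
      have hθ₁ : θ₁ = 0 := by
        rw [← hp]
        have : p = 0 := by exact_mod_cast (by linarith [hp0] : (p : ℚ) = 0)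
        simp [this]
      have := hind 1 0 (by simp [hθ₁])
      exact one_ne_zero this.1
  -- main claim: small positive differences
  have key : ∀ ε : ℝ, 0 < ε → ∃ n m : ℤ × ℤ,
      0 < |distSq n θ₁ θ₂ - distSq m θ₁ θ₂| ∧ |distSq n θ₁ θ₂ - distSq m θ₁ θ₂| < ε := by
    intro ε hε
    obtain ⟨x, hxS, hx0, hxε⟩ :
        ∃ x ∈ (S : Set ℝ), x ∈ Set.Ioo (0 : ℝ) (ε / 4) := by
      have := hdense.exists_mem_open isOpen_Ioo
        (⟨ε / 8, by constructor <;> linarith⟩ : (Set.Ioo (0 : ℝ) (ε / 4)).Nonempty)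
      rcases this with ⟨x, hx, hmem⟩
      exact ⟨x, hx, hmem⟩
    obtain ⟨k, l, hkl⟩ := hxS
    refine ⟨(k + 2 * l, l - 2 * k), (2 * l - k, -l - 2 * k), ?_, ?_⟩ <;>
    · have hdiff : distSq (k + 2 * l, l - 2 * k) θ₁ θ₂ -
          distSq (2 * l - k, -l - 2 * k) θ₁ θ₂ = -4 * x := by
        rw [← hkl]
        simp only [distSq]
        push_cast
        ring
      rw [hdiff, abs_of_nonpos (by linarith)]
      linarith
  refine ⟨key, ?_⟩
  rintro ⟨γ, hγ, H⟩
  obtain ⟨n, m, h1, h2⟩ := key γ hγ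
  have hne : distSq n θ₁ θ₂ ≠ distSq m θ₁ θ₂ := by
    intro h
    rw [h] at h1
    simp at h1
  linarith [H n m hne]
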